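/- Let τ, σ ∈ ℂ with Im τ > 0 and Im σ > 0 (hence Im(τ+σ) > 0), and let z ∈ ℂ with z ∉ {jτ + kσ + l : j, k, l ∈ ℤ}. Then Γ(z,τ,σ) = Γ(z,τ,τ+σ) · Γ(z+σ,τ+σ,σ). -/

import Mathlib

namespace EGG

/-- Integer vectors in `ℤ³`. -/
abbrev V : Type := Fin 3 → ℤ

/-- gcd of the three coordinates. -/
def gcd3 (v : V) : ℕ := Nat.gcd (Nat.gcd (v 0).natAbs (v 1).natAbs) (v 2).natAbs

/-- A vector of `ℤ³` is primitive if it is nonzero and the gcd of its coordinates is 1. -/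
def Primitive (a : V) : Prop := a ≠ 0 ∧ gcd3 a = 1

/-- Cross product of integer vectors. -/
def cross (a b : V) : V :=
  ![a 1 * b 2 - a 2 * b 1, a 2 * b 0 - a 0 * b 2, a 0 * b 1 - a 1 * b 0]

/-- Dot product of integer vectors. -/
def dotZ (α a : V) : ℤ := α 0 * a 0 + α 1 * a 1 + α 2 * a 2

/-- Dot product of a rational vector with an integer vector. -/
def dotQ (α : Fin 3 → ℚ) (a : V) : ℚ := α 0 * (a 0 : ℚ) + α 1 * (a 1 : ℚ) + α 2 * (a 2 : ℚ)

/-- Dot product of a real vector with an integer vector. -/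
def dotR (l : Fin 3 → ℝ) (a : V) : ℝ := l 0 * (a 0 : ℝ) + l 1 * (a 1 : ℝ) + l 2 * (a 2 : ℝ)

/-- The pairing `α(x) = α₁x₁+α₂x₂+α₃x₃` of a rational vector with a complex vector. -/
noncomputable def pairQ (α : Fin 3 → ℚ) (x : Fin 3 → ℂ) : ℂ :=
  (α 0 : ℂ) * x 0 + (α 1 : ℂ) * x 1 + (α 2 : ℂ) * x 2

/-- The pairing `α(x) = α₁x₁+α₂x₂+α₃x₃` of an integer vector with a complex vector. -/
noncomputable def pairZ (α : V) (x : Fin 3 → ℂ) : ℂ :=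
  (α 0 : ℂ) * x 0 + (α 1 : ℂ) * x 1 + (α 2 : ℂ) * x 2

/-- The canonical map `ℤ³ → ℚ³`. -/
def toQ (a : V) : Fin 3 → ℚ := fun i => (a i : ℚ)

/-- Determinant of the 3×3 matrix with rows `α, β, δ`. -/
def det3Q (α β δ : Fin 3 → ℚ) : ℚ := Matrix.det (Matrix.of ![α, β, δ])

/-- `(α, β)` is an oriented basis of the plane `H(a) = {α : α·a = 0}`. -/
def IsOrientedBasis (a : V) (α β : Fin 3 → ℚ) : Prop :=
  dotQ α a = 0 ∧ dotQ β a = 0 ∧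
  LinearIndependent ℚ ![α, β] ∧
  (∀ δ : Fin 3 → ℚ, dotQ δ a = 0 → ∃ p q : ℚ, δ = p • α + q • β) ∧
  (∀ δ : Fin 3 → ℚ, 0 < dotQ δ a → 0 < det3Q α β δ)

/-- The domain `U⁺_a ⊆ ℂ³`. -/
noncomputable def UPlus (a : V) : Set (Fin 3 → ℂ) :=
  {x | ∃ α β : Fin 3 → ℚ, IsOrientedBasis a α β ∧
    0 < (pairQ α x * (starRingEnd ℂ) (pairQ β x)).im}

/-- `γ` is the direction vector of the wedge `(a,b)`: `γ` is primitive and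
`a × b = s • γ` for some integer `s ≥ 1` (the modulus). -/
def IsDirVec (a b γ : V) : Prop :=
  Primitive γ ∧ ∃ s : ℤ, 1 ≤ s ∧ cross a b = s • γ

/-- `C₊₋(a,b) = {δ ∈ ℤ³ : δ·a > 0, δ·b ≤ 0}`. -/
def Cpm (a b : V) : Set V := {δ | 0 < dotZ δ a ∧ dotZ δ b ≤ 0}

/-- `C₋₊(a,b) = {δ ∈ ℤ³ : δ·a ≤ 0, δ·b > 0}`. -/
def Cmp (a b : V) : Set V := {δ | dotZ δ a ≤ 0 ∧ 0 < dotZ δ b}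

/-- The factor `1 - e^{-2πi(δ(x)-w)/γ(x)}` appearing in the numerator of `Γ_{a,b}`. -/
noncomputable def gammaFacP (γ : V) (x : Fin 3 → ℂ) (w : ℂ) (δ : V) : ℂ :=
  1 - Complex.exp (-(2 * (Real.pi : ℂ) * Complex.I) * (pairZ δ x - w) / pairZ γ x)

/-- The factor `1 - e^{2πi(δ(x)-w)/γ(x)}` appearing in the denominator of `Γ_{a,b}`. -/
noncomputable def gammaFacM (γ : V) (x : Fin 3 → ℂ) (w : ℂ) (δ : V) : ℂ :=
  1 - Complex.exp ((2 * (Real.pi : ℂ) * Complex.I) * (pairZ δ x - w) / pairZ γ x)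

/-- The gamma function `Γ_{a,b}(w,x)` of the wedge `(a,b)` with direction vector `γ`:
the products run over the sets `C₊₋(a,b)/ℤγ` and `C₋₊(a,b)/ℤγ`; each factor is evaluated
on the chosen representative `Quotient.out q` of the class `q` (the factors are constant
on classes modulo `ℤγ`). -/
noncomputable def GammaWedge (a b γ : V) (w : ℂ) (x : Fin 3 → ℂ) : ℂ :=
  if a = b then 1 else
    (∏' q : (QuotientAddGroup.mk '' Cpm a b : Set (V ⧸ AddSubgroup.zmultiples γ)),
      gammaFacP γ x w (Quotient.out (q : V ⧸ AddSubgroup.zmultiples γ))) /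
    (∏' q : (QuotientAddGroup.mk '' Cmp a b : Set (V ⧸ AddSubgroup.zmultiples γ)),
      gammaFacM γ x w (Quotient.out (q : V ⧸ AddSubgroup.zmultiples γ)))

/-- The theta function `θ₀(z,τ)`, for `Im τ > 0`. -/
noncomputable def theta0 (z τ : ℂ) : ℂ :=
  ∏' j : ℕ, ((1 - Complex.exp (2 * (Real.pi : ℂ) * Complex.I * (((j : ℂ) + 1) * τ - z))) *
    (1 - Complex.exp (2 * (Real.pi : ℂ) * Complex.I * ((j : ℂ) * τ + z))))

/-- The elliptic gamma function `Γ(z,τ,σ)`, for `Im τ > 0` and `Im σ > 0`. -/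
noncomputable def ellGamma (z τ σ : ℂ) : ℂ :=
  (∏' p : ℕ × ℕ, (1 - Complex.exp (2 * (Real.pi : ℂ) * Complex.I *
      (((p.1 : ℂ) + 1) * τ + ((p.2 : ℂ) + 1) * σ - z)))) /
  (∏' p : ℕ × ℕ, (1 - Complex.exp (2 * (Real.pi : ℂ) * Complex.I *
      ((p.1 : ℂ) * τ + (p.2 : ℂ) * σ + z))))

/-- The elliptic gamma function `Γ̃(z,τ,σ)` in the domain `Im τ < 0 < Im σ`. -/
noncomputable def ellGammaTilde (z τ σ : ℂ) : ℂ :=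
  (∏' p : ℕ × ℕ, (1 - Complex.exp (2 * (Real.pi : ℂ) * Complex.I *
      (z - ((p.1 : ℂ) + 1) * τ + (p.2 : ℂ) * σ)))) /
  (∏' p : ℕ × ℕ, (1 - Complex.exp (2 * (Real.pi : ℂ) * Complex.I *
      (-z - (p.1 : ℂ) * τ + ((p.2 : ℂ) + 1) * σ))))

/-- The polynomial `P₂`. -/
noncomputable def P2 (w x₁ x₂ : ℂ) : ℂ :=
  (w ^ 2 - (x₁ + x₂) * w + (x₁ ^ 2 + x₂ ^ 2 + 3 * x₁ * x₂) / 6) / (x₁ * x₂)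

/-- The Bernoulli polynomial `P₃ = B₃,₃`. -/
noncomputable def P3 (w x₁ x₂ x₃ : ℂ) : ℂ :=
  w ^ 3 / (x₁ * x₂ * x₃) - (3 * (x₁ + x₂ + x₃) / (2 * (x₁ * x₂ * x₃))) * w ^ 2
    + ((x₁ ^ 2 + x₂ ^ 2 + x₃ ^ 2 + 3 * x₁ * x₂ + 3 * x₂ * x₃ + 3 * x₁ * x₃)
        / (2 * (x₁ * x₂ * x₃))) * w
    - (1 / 4) * (x₁ + x₂ + x₃) * (1 / x₁ + 1 / x₂ + 1 / x₃)

/-- The real polynomial `R₃ = B₂,₃`. -/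
noncomputable def R3 (ζ t s : ℝ) : ℝ :=
  ζ ^ 3 / (t * s) - (3 / 2) * (1 / t + 1 / s) * ζ ^ 2
    + (t / (2 * s) + s / (2 * t) + 3 / 2) * ζ - (t + s) / 4

/-- The hermitian weight `h₂(z,τ)` for the theta bundle. -/
noncomputable def h2 (z τ : ℂ) : ℝ :=
  Real.exp (-2 * Real.pi * z.im ^ 2 / τ.im + 2 * Real.pi * (z - τ / 6).im)

/-- The hermitian weight `h₃(z,τ,σ)`. -/
noncomputable def h3 (z τ σ : ℂ) : ℝ :=
  Real.exp (-(2 * Real.pi / 3) * R3 z.im τ.im σ.im)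

/-- The finite product of theta functions `Δ` with parameters `A₁ = α₁(x)`, `A₂ = α₂(x)`,
`A₃ = α₃(x)` and first framing coordinate `m = μ(a)`:
`∏_{j=0}^{m-1} θ₀((w+jA₁)/A₃, A₂/A₃)` for `m ≥ 0` and
`(∏_{j=m}^{-1} θ₀((w+jA₁)/A₃, A₂/A₃))⁻¹` for `m < 0`. -/
noncomputable def DeltaInt (w A₁ A₂ A₃ : ℂ) (m : ℤ) : ℂ :=
  if 0 ≤ m then
    ∏ j ∈ Finset.range m.toNat, theta0 ((w + (j : ℂ) * A₁) / A₃) (A₂ / A₃)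
  else
    (∏ j ∈ Finset.range (-m).toNat, theta0 ((w - ((j : ℂ) + 1) * A₁) / A₃) (A₂ / A₃))⁻¹


section Aux
open Complex Filter


open Complex Filter

/-- The basic factor. -/
noncomputable def Fab (a b c : ℂ) (p : ℕ × ℕ) : ℂ :=
  1 - Complex.exp (2 * (Real.pi : ℂ) * Complex.I * ((p.1 : ℂ) * a + (p.2 : ℂ) * b + c))

lemma norm_exp_eq (a b c : ℂ) (p : ℕ × ℕ) :
    ‖Complex.exp (2 * (Real.pi : ℂ) * Complex.I * ((p.1 : ℂ) * a + (p.2 : ℂ) * b + c))‖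
      = Real.exp (-(2 * Real.pi * a.im)) ^ p.1 *
        (Real.exp (-(2 * Real.pi * b.im)) ^ p.2 * Real.exp (-(2 * Real.pi * c.im))) := by
  rw [Complex.norm_exp, ← Real.exp_nat_mul, ← Real.exp_nat_mul,
    ← Real.exp_add, ← Real.exp_add]
  congr 1
  simp [Complex.mul_re, Complex.mul_im, Complex.add_re, Complex.add_im]
  ring

lemma summable_expfun (a b c : ℂ) (ha : 0 < a.im) (hb : 0 < b.im) :
    Summable fun p : ℕ × ℕ =>
      ‖Complex.exp (2 * (Real.pi : ℂ) * Complex.I * ((p.1 : ℂ) * a + (p.2 : ℂ) * b + c))‖ := by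
  have h1 : Summable fun j : ℕ => Real.exp (-(2 * Real.pi * a.im)) ^ j :=
    summable_geometric_of_lt_one (Real.exp_nonneg _)
      (Real.exp_lt_one_iff.mpr (by nlinarith [Real.pi_pos]))
  have h2 : Summable fun k : ℕ => Real.exp (-(2 * Real.pi * b.im)) ^ k :=
    summable_geometric_of_lt_one (Real.exp_nonneg _)
      (Real.exp_lt_one_iff.mpr (by nlinarith [Real.pi_pos]))
  have := h1.mul_of_nonneg (h2.mul_right (Real.exp (-(2 * Real.pi * c.im))))
    (fun j => pow_nonneg (Real.exp_nonneg _) _)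
    (fun k => mul_nonneg (pow_nonneg (Real.exp_nonneg _) _) (Real.exp_nonneg _))
  exact this.congr fun p => (norm_exp_eq a b c p).symm

lemma summable_log_Fab (a b c : ℂ) (ha : 0 < a.im) (hb : 0 < b.im) :
    Summable fun p : ℕ × ℕ => Complex.log (Fab a b c p) := by
  have hs := summable_expfun a b c ha hb
  have hev : ∀ᶠ p : ℕ × ℕ in Filter.cofinite,
      ‖Complex.exp (2 * (Real.pi : ℂ) * Complex.I * ((p.1 : ℂ) * a + (p.2 : ℂ) * b + c))‖ ≤ 1/2 :=
    hs.tendsto_cofinite_zero.eventually (eventually_le_nhds (by norm_num))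
  apply Summable.of_norm_bounded_eventually
    (g := fun p : ℕ × ℕ => 3/2 *
      ‖Complex.exp (2 * (Real.pi : ℂ) * Complex.I * ((p.1 : ℂ) * a + (p.2 : ℂ) * b + c))‖)
    (hs.mul_left _)
  filter_upwards [hev] with p hp
  have hE : Fab a b c p
      = 1 + (-(Complex.exp (2 * (Real.pi : ℂ) * Complex.I * ((p.1 : ℂ) * a + (p.2 : ℂ) * b + c)))) := by
    rw [Fab]; ring
  rw [hE]
  have := Complex.norm_log_one_add_half_le_self
    (z := -(Complex.exp (2 * (Real.pi : ℂ) * Complex.I * ((p.1 : ℂ) * a + (p.2 : ℂ) * b + c))))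
    (by simpa using hp)
  simpa using this

lemma multipliable_Fab_comp {ι : Type} (a b c : ℂ) (g : ι → ℕ × ℕ)
    (ha : 0 < a.im) (hb : 0 < b.im) (h0 : ∀ p : ℕ × ℕ, Fab a b c p ≠ 0)
    (hg : Function.Injective g) : Multipliable fun i => Fab a b c (g i) := by
  refine Complex.multipliable_of_summable_log ?_
  exact (summable_log_Fab a b c ha hb).comp_injective hg


open Complex Filter

def eGT : ℕ × ℕ ≃ ↥{p : ℕ × ℕ | p.2 < p.1} where
  toFun p := ⟨(p.1 + p.2 + 1, p.2), by first | (simp; omega) | simp⟩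
  invFun q := (q.1.1 - q.1.2 - 1, q.1.2)
  left_inv p := by ext <;> simp <;> omega
  right_inv q := by
    obtain ⟨⟨j, k⟩, h⟩ := q
    simp only [Set.mem_setOf_eq] at h
    ext <;> simp <;> omega

def eGTc : ℕ × ℕ ≃ ↥({p : ℕ × ℕ | p.2 < p.1}ᶜ) where
  toFun p := ⟨(p.1, p.1 + p.2), by first | (simp; omega) | simp⟩
  invFun q := (q.1.1, q.1.2 - q.1.1)
  left_inv p := by ext <;> simp <;> omega
  right_inv q := by
    obtain ⟨⟨j, k⟩, h⟩ := q
    simp only [Set.mem_compl_iff, Set.mem_setOf_eq, not_lt] at h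
    ext <;> simp <;> omega

def eGE : ℕ × ℕ ≃ ↥{p : ℕ × ℕ | p.2 ≤ p.1} where
  toFun p := ⟨(p.1 + p.2, p.2), by first | (simp; omega) | simp⟩
  invFun q := (q.1.1 - q.1.2, q.1.2)
  left_inv p := by ext <;> simp <;> omega
  right_inv q := by
    obtain ⟨⟨j, k⟩, h⟩ := q
    simp only [Set.mem_setOf_eq] at h
    ext <;> simp <;> omega

def eGEc : ℕ × ℕ ≃ ↥({p : ℕ × ℕ | p.2 ≤ p.1}ᶜ) where
  toFun p := ⟨(p.1, p.1 + p.2 + 1), by first | (simp; omega) | simp⟩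
  invFun q := (q.1.1, q.1.2 - q.1.1 - 1)
  left_inv p := by ext <;> simp <;> omega
  right_inv q := by
    obtain ⟨⟨j, k⟩, h⟩ := q
    simp only [Set.mem_compl_iff, Set.mem_setOf_eq, not_le] at h
    ext <;> simp <;> omega

lemma split_lt (f : ℕ × ℕ → ℂ)
    (h1 : Multipliable fun x : ↥{p : ℕ × ℕ | p.2 < p.1} => f x)
    (h2 : Multipliable fun x : ↥({p : ℕ × ℕ | p.2 < p.1}ᶜ) => f x) :
    ∏' p, f p = (∏' p : ℕ × ℕ, f (p.1 + p.2 + 1, p.2)) * ∏' p : ℕ × ℕ, f (p.1, p.1 + p.2) := by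
  rw [← Multipliable.tprod_mul_tprod_compl h1 h2]
  congr 1
  · exact (Equiv.tprod_eq eGT fun x : ↥{p : ℕ × ℕ | p.2 < p.1} => f x).symm
  · exact (Equiv.tprod_eq eGTc fun x : ↥({p : ℕ × ℕ | p.2 < p.1}ᶜ) => f x).symm

lemma split_le (f : ℕ × ℕ → ℂ)
    (h1 : Multipliable fun x : ↥{p : ℕ × ℕ | p.2 ≤ p.1} => f x)
    (h2 : Multipliable fun x : ↥({p : ℕ × ℕ | p.2 ≤ p.1}ᶜ) => f x) :
    ∏' p, f p = (∏' p : ℕ × ℕ, f (p.1 + p.2, p.2)) * ∏' p : ℕ × ℕ, f (p.1, p.1 + p.2 + 1) := by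
  rw [← Multipliable.tprod_mul_tprod_compl h1 h2]
  congr 1
  · exact (Equiv.tprod_eq eGE fun x : ↥{p : ℕ × ℕ | p.2 ≤ p.1} => f x).symm
  · exact (Equiv.tprod_eq eGEc fun x : ↥({p : ℕ × ℕ | p.2 ≤ p.1}ᶜ) => f x).symm


end Aux

/-- the three-term relation
`Γ(z,τ,σ) = Γ(z,τ,τ+σ)·Γ(z+σ,τ+σ,σ)`. -/
theorem statement16 (z τ σ : ℂ) (hτ : 0 < τ.im) (hσ : 0 < σ.im)
    (hz : ∀ j k l : ℤ, z ≠ (j : ℂ) * τ + (k : ℂ) * σ + (l : ℂ)) :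
    ellGamma z τ σ = ellGamma z τ (τ + σ) * ellGamma (z + σ) (τ + σ) σ := by
  have hpi : (2 * (Real.pi : ℂ) * Complex.I) ≠ 0 :=
    mul_ne_zero (mul_ne_zero two_ne_zero (Complex.ofReal_ne_zero.mpr Real.pi_ne_zero))
      Complex.I_ne_zero
  -- nonvanishing of the factors
  have hne : ∀ c : ℂ, (∀ (p : ℕ × ℕ) (n : ℤ), ((p.1 : ℂ) * τ + (p.2 : ℂ) * σ + c) ≠ (n : ℂ)) →
      ∀ p : ℕ × ℕ, Fab τ σ c p ≠ 0 := by
    intro c hc p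
    rw [Fab, sub_ne_zero]
    intro h
    obtain ⟨n, hn⟩ := Complex.exp_eq_one_iff.mp h.symm
    refine hc p n (mul_left_cancel₀ hpi ?_)
    rw [hn]; ring
  have h0N : ∀ p : ℕ × ℕ, Fab τ σ (τ + σ - z) p ≠ 0 := by
    refine hne _ fun p n h => hz (p.1 + 1) (p.2 + 1) (-n) ?_
    push_cast
    linear_combination -h
  have h0D : ∀ p : ℕ × ℕ, Fab τ σ z p ≠ 0 := by
    refine hne _ fun p n h => hz (-(p.1 : ℤ)) (-(p.2 : ℤ)) n ?_
    push_cast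
    linear_combination h
  -- multipliability of restrictions
  have mN1 := multipliable_Fab_comp τ σ (τ + σ - z)
    (fun x : ↥{p : ℕ × ℕ | p.2 < p.1} => (x : ℕ × ℕ)) hτ hσ h0N Subtype.val_injective
  have mN2 := multipliable_Fab_comp τ σ (τ + σ - z)
    (fun x : ↥({p : ℕ × ℕ | p.2 < p.1}ᶜ) => (x : ℕ × ℕ)) hτ hσ h0N Subtype.val_injective
  have mD1 := multipliable_Fab_comp τ σ z
    (fun x : ↥{p : ℕ × ℕ | p.2 ≤ p.1} => (x : ℕ × ℕ)) hτ hσ h0D Subtype.val_injective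
  have mD2 := multipliable_Fab_comp τ σ z
    (fun x : ↥({p : ℕ × ℕ | p.2 ≤ p.1}ᶜ) => (x : ℕ × ℕ)) hτ hσ h0D Subtype.val_injective
  have hsplitN := split_lt (Fab τ σ (τ + σ - z)) mN1 mN2
  have hsplitD := split_le (Fab τ σ z) mD1 mD2
  -- identify the six tprods
  have eN : (∏' p : ℕ × ℕ, (1 - Complex.exp (2 * (Real.pi : ℂ) * Complex.I *
        (((p.1 : ℂ) + 1) * τ + ((p.2 : ℂ) + 1) * σ - z)))) = ∏' p, Fab τ σ (τ + σ - z) p :=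
    tprod_congr fun p => by rw [Fab]; congr 2; ring
  have eD : (∏' p : ℕ × ℕ, (1 - Complex.exp (2 * (Real.pi : ℂ) * Complex.I *
        ((p.1 : ℂ) * τ + (p.2 : ℂ) * σ + z)))) = ∏' p, Fab τ σ z p :=
    tprod_congr fun p => by rw [Fab]
  have eN1 : (∏' p : ℕ × ℕ, (1 - Complex.exp (2 * (Real.pi : ℂ) * Complex.I *
        (((p.1 : ℂ) + 1) * τ + ((p.2 : ℂ) + 1) * (τ + σ) - z))))
      = ∏' p : ℕ × ℕ, Fab τ σ (τ + σ - z) (p.1 + p.2 + 1, p.2) :=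
    tprod_congr fun p => by rw [Fab]; congr 2; push_cast; ring
  have eN2 : (∏' p : ℕ × ℕ, (1 - Complex.exp (2 * (Real.pi : ℂ) * Complex.I *
        (((p.1 : ℂ) + 1) * (τ + σ) + ((p.2 : ℂ) + 1) * σ - (z + σ)))))
      = ∏' p : ℕ × ℕ, Fab τ σ (τ + σ - z) (p.1, p.1 + p.2) :=
    tprod_congr fun p => by rw [Fab]; congr 2; push_cast; ring
  have eD1 : (∏' p : ℕ × ℕ, (1 - Complex.exp (2 * (Real.pi : ℂ) * Complex.I *
        ((p.1 : ℂ) * τ + (p.2 : ℂ) * (τ + σ) + z))))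
      = ∏' p : ℕ × ℕ, Fab τ σ z (p.1 + p.2, p.2) :=
    tprod_congr fun p => by rw [Fab]; congr 2; push_cast; ring
  have eD2 : (∏' p : ℕ × ℕ, (1 - Complex.exp (2 * (Real.pi : ℂ) * Complex.I *
        ((p.1 : ℂ) * (τ + σ) + (p.2 : ℂ) * σ + (z + σ)))))
      = ∏' p : ℕ × ℕ, Fab τ σ z (p.1, p.1 + p.2 + 1) :=
    tprod_congr fun p => by rw [Fab]; congr 2; push_cast; ring
  rw [ellGamma, ellGamma, ellGamma, eN, eD, eN1, eN2, eD1, eD2, hsplitN, hsplitD,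
    div_mul_div_comm]

end EGG
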